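/- The maximum of nfc(F) over all minimally unsatisfiable clause-sets F with deficiency δ(F) = 7 equals 9 (i.e., nfc(F) ≤ 9 for all such F, and there exists such an F with nfc(F) = 9), while the maximum of nfc(F) over all unsatisfiable hitting clause-sets F with δ(F) = 7 equals 8. -/

import Mathlib

/-- A clause: a finite set of nonzero integers (literals) that is clash-free. -/
def IsClause (C : Finset ℤ) : Prop := (0 : ℤ) ∉ C ∧ ∀ x ∈ C, -x ∉ C

/-- A clause-set: a finite set of clauses. -/
def IsClauseSet (F : Finset (Finset ℤ)) : Prop := ∀ C ∈ F, IsClause C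

/-- The variables of a clause: the absolute values of its literals. -/
def clauseVar (C : Finset ℤ) : Finset ℕ := C.image Int.natAbs

/-- The variables of a clause-set. -/
def var (F : Finset (Finset ℤ)) : Finset ℕ := F.biUnion clauseVar

/-- The number of variables `n(F)`. -/
def numVar (F : Finset (Finset ℤ)) : ℕ := (var F).card

/-- The deficiency `δ(F) = c(F) - n(F)`. -/
def deficiency (F : Finset (Finset ℤ)) : ℤ := (F.card : ℤ) - (numVar F : ℤ)

/-- `F` is satisfiable iff some clause `C` intersects every clause of `F`. -/
def Satisfiable (F : Finset (Finset ℤ)) : Prop :=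
  ∃ C : Finset ℤ, IsClause C ∧ ∀ D ∈ F, (C ∩ D).Nonempty

/-- `F` is hitting iff any two distinct clauses of `F` clash. -/
def Hitting (F : Finset (Finset ℤ)) : Prop :=
  ∀ C ∈ F, ∀ D ∈ F, C ≠ D → ∃ x ∈ C, -x ∈ D

/-- `F` is minimally unsatisfiable. -/
def MinUnsat (F : Finset (Finset ℤ)) : Prop :=
  ¬ Satisfiable F ∧ ∀ G ⊂ F, Satisfiable G

/-- The number of full clauses of `F`. -/
def nfc (F : Finset (Finset ℤ)) : ℕ :=
  (F.filter (fun C => clauseVar C = var F)).card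

/-- The degree of a variable `v` in `F`. -/
def vdeg (F : Finset (Finset ℤ)) (v : ℕ) : ℕ :=
  (F.filter (fun C => v ∈ clauseVar C)).card

/-- The minimal variable-degree of `F` (for `n(F) > 0`). -/
noncomputable def minVarDeg (F : Finset (Finset ℤ)) : ℕ :=
  sInf {d : ℕ | ∃ v ∈ var F, vdeg F v = d}

namespace KZ

open Finset

variable (F : Finset (Finset ℤ))

/-- coordinates -/
abbrev VV := {x : ℕ // x ∈ var F}

/-- truth value of a literal under a total assignment -/
def litT (t : VV F → Bool) (x : ℤ) : Bool :=
  if h : x.natAbs ∈ var F then t ⟨x.natAbs, h⟩ == decide (0 < x) else false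

/-- t falsifies clause C -/
def fals (t : VV F → Bool) (C : Finset ℤ) : Prop := ∀ x ∈ C, litT F t x = false

instance (t : VV F → Bool) (C : Finset ℤ) : Decidable (fals F t C) := by
  unfold fals; infer_instance

def flp (v : VV F) (t : VV F → Bool) : VV F → Bool := Function.update t v (!(t v))

/-- falsifying point of a full clause -/
def pt (C : Finset ℤ) : VV F → Bool := fun v => decide ((-(v.1 : ℤ)) ∈ C)

variable {F}

lemma mem_var_of_mem {C : Finset ℤ} {x : ℤ} (hC : C ∈ F) (hx : x ∈ C) :
    x.natAbs ∈ var F := by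
  exact Finset.mem_biUnion.2 ⟨C, hC, Finset.mem_image.2 ⟨x, hx, rfl⟩⟩

lemma natAbs_ne_zero_of_clause {C : Finset ℤ} (hC : IsClause C) {x : ℤ} (hx : x ∈ C) :
    x ≠ 0 := fun h => hC.1 (h ▸ hx)

lemma decide_pos_neg {x : ℤ} (hx : x ≠ 0) : decide (0 < -x) = !decide (0 < x) := by
  rcases lt_or_gt_of_ne hx with h' | h'
  · have h1 : (0:ℤ) < -x := by omega
    have h2 : ¬ (0:ℤ) < x := by omega
    simp [h1, h2]; omega
  · have h1 : ¬ (0:ℤ) < -x := by omega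
    simp [h1, h']; omega

lemma litT_neg {t : VV F → Bool} {x : ℤ} (hx : x ≠ 0) (h : x.natAbs ∈ var F) :
    litT F t (-x) = !litT F t x := by
  unfold litT
  rw [Int.natAbs_neg, dif_pos h, dif_pos h, decide_pos_neg hx]
  cases t ⟨x.natAbs, h⟩ <;> cases decide (0 < x) <;> rfl

/-- update at another coordinate doesn't change a literal's value -/
lemma litT_flp_ne {t : VV F → Bool} {v : VV F} {x : ℤ} (hne : x.natAbs ≠ v.1) :
    litT F (flp F v t) x = litT F t x := by
  unfold litT flp
  by_cases h : x.natAbs ∈ var F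
  · rw [dif_pos h, dif_pos h, Function.update_of_ne]
    intro hh
    exact hne (congrArg Subtype.val hh)
  · rw [dif_neg h, dif_neg h]

lemma litT_flp_eq {t : VV F → Bool} {v : VV F} {x : ℤ} (hx : x.natAbs = v.1) :
    litT F (flp F v t) x = !litT F t x := by
  unfold litT flp
  have h : x.natAbs ∈ var F := hx ▸ v.2
  rw [dif_pos h, dif_pos h]
  have hv : (⟨x.natAbs, h⟩ : VV F) = v := Subtype.ext hx
  rw [hv, Function.update_self]
  cases t v <;> cases (decide (0 < x)) <;> rfl

lemma flp_flp (v : VV F) (t : VV F → Bool) : flp F v (flp F v t) = t := by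
  funext w
  unfold flp
  by_cases h : w = v
  · subst h; simp
  · rw [Function.update_of_ne h, Function.update_of_ne h]

lemma flp_ne (v : VV F) (t : VV F → Bool) : flp F v t ≠ t := by
  intro h
  have := congrFun h v
  unfold flp at this
  rw [Function.update_self] at this
  cases t v <;> simp_all

lemma flp_apply_ne {v w : VV F} (t : VV F → Bool) (h : w ≠ v) : flp F v t w = t w :=
  Function.update_of_ne h _ t

lemma flp_apply_eq (v : VV F) (t : VV F → Bool) : flp F v t v = !(t v) :=
  Function.update_self v _ t

/-- the clause of literals made true by t -/
def asClause (t : VV F → Bool) : Finset ℤ :=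
  (var F).attach.image (fun v => if t v then (v.1 : ℤ) else -(v.1 : ℤ))

lemma zero_not_mem_var (hCS : IsClauseSet F) : (0 : ℕ) ∉ var F := by
  intro h
  rcases Finset.mem_biUnion.1 h with ⟨C, hC, h0⟩
  rcases Finset.mem_image.1 h0 with ⟨x, hx, hx0⟩
  exact (hCS C hC).1 (by rwa [Int.natAbs_eq_zero.1 hx0] at hx)

lemma asClause_isClause (hCS : IsClauseSet F) (t : VV F → Bool) : IsClause (asClause t) := by
  constructor
  · intro h
    rcases Finset.mem_image.1 h with ⟨⟨a, ha⟩, _, hv⟩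
    have hv0 : a ≠ 0 := fun h0 => zero_not_mem_var hCS (h0 ▸ ha)
    dsimp only at hv
    split at hv <;> omega
  · intro x hx h'
    rcases Finset.mem_image.1 hx with ⟨⟨a, ha⟩, _, hv⟩
    rcases Finset.mem_image.1 h' with ⟨⟨b, hb⟩, _, hw⟩
    have hv0 : a ≠ 0 := fun h0 => zero_not_mem_var hCS (h0 ▸ ha)
    dsimp only at hv hw
    have hvw : a = b := by split at hv <;> split at hw <;> omega
    subst hvw
    split at hv <;> split at hw <;> first | omega | simp_all

/-- a true literal lies in asClause t -/
lemma mem_asClause_of_litT {t : VV F → Bool} {x : ℤ} (hx : x ≠ 0)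
    (h : x.natAbs ∈ var F) (hlit : litT F t x = true) : x ∈ asClause t := by
  unfold litT at hlit
  rw [dif_pos h] at hlit
  have hb : t ⟨x.natAbs, h⟩ = decide (0 < x) := by
    have := of_decide_eq_true (by simpa using hlit)
    cases htv : t ⟨x.natAbs, h⟩ <;> cases hdx : decide (0 < x) <;> simp_all
  apply Finset.mem_image.2
  refine ⟨⟨x.natAbs, h⟩, Finset.mem_attach _ _, ?_⟩
  rcases lt_or_gt_of_ne hx with h' | h'
  · have : decide (0 < x) = false := by simp; omega
    rw [hb, this]
    simp only [if_neg Bool.false_ne_true]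
    show -((x.natAbs : ℕ) : ℤ) = x
    omega
  · have : decide (0 < x) = true := by simp [h']
    rw [hb, this, if_pos rfl]
    show ((x.natAbs : ℕ) : ℤ) = x
    omega

/-- unsatisfiability: every total assignment falsifies some clause -/
lemma allFals (hCS : IsClauseSet F) (hU : ¬ Satisfiable F) (t : VV F → Bool) :
    ∃ D ∈ F, fals F t D := by
  by_contra h
  push_neg at h
  apply hU
  refine ⟨asClause t, asClause_isClause hCS t, fun D hD => ?_⟩
  have hnf := h D hD
  unfold fals at hnf
  push_neg at hnf
  rcases hnf with ⟨x, hxD, hlit⟩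
  have hlit' : litT F t x = true := by
    cases hl : litT F t x
    · exact absurd hl hlit
    · rfl
  exact ⟨x, Finset.mem_inter.2 ⟨mem_asClause_of_litT (natAbs_ne_zero_of_clause (hCS D hD) hxD)
      (mem_var_of_mem hD hxD) hlit', hxD⟩⟩

/-- the assignment induced by a witness clause A makes its literals true -/
lemma litT_asg {A : Finset ℤ} (hA : IsClause A) {x : ℤ} (hx : x ∈ A)
    (h : x.natAbs ∈ var F) :
    litT F (fun v => decide ((v.1 : ℤ) ∈ A)) x = true := by
  have hx0 : x ≠ 0 := natAbs_ne_zero_of_clause hA hx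
  unfold litT
  rw [dif_pos h]
  show (decide (((x.natAbs : ℕ) : ℤ) ∈ A) == decide (0 < x)) = true
  rcases lt_or_gt_of_ne hx0 with h' | h'
  · have h1 : ((x.natAbs : ℕ) : ℤ) = -x := by omega
    rw [h1]
    have h2 : (-x) ∉ A := hA.2 x hx
    have e1 : decide ((-x) ∈ A) = false := by simpa using h2
    have e2 : decide (0 < x) = false := by simp; omega
    rw [e1, e2]; rfl
  · have h1 : ((x.natAbs : ℕ) : ℤ) = x := by omega
    rw [h1]
    have e1 : decide (x ∈ A) = true := by simpa using hx
    have e2 : decide (0 < x) = true := by simpa using h'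
    rw [e1, e2]; rfl

/-- falsifying point of a clause falsifies it -/
lemma fals_pt {C : Finset ℤ} (hC : IsClause C) (hsub : clauseVar C ⊆ var F) :
    fals F (pt F C) C := by
  intro x hx
  have hx0 : x ≠ 0 := natAbs_ne_zero_of_clause hC hx
  have h : x.natAbs ∈ var F := hsub (Finset.mem_image.2 ⟨x, hx, rfl⟩)
  unfold litT pt
  rw [dif_pos h]
  show (decide ((-((x.natAbs : ℕ) : ℤ)) ∈ C) == decide (0 < x)) = false
  rcases lt_or_gt_of_ne hx0 with h' | h'
  · have h1 : -((x.natAbs : ℕ) : ℤ) = x := by omega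
    rw [h1]
    have e1 : decide (x ∈ C) = true := by simpa using hx
    have e2 : decide (0 < x) = false := by simp; omega
    rw [e1, e2]; rfl
  · have h1 : -((x.natAbs : ℕ) : ℤ) = -x := by omega
    rw [h1]
    have e1 : decide ((-x) ∈ C) = false := by simpa using hC.2 x hx
    have e2 : decide (0 < x) = true := by simpa using h'
    rw [e1, e2]; rfl

lemma clauseVar_subset {C : Finset ℤ} (hC : C ∈ F) : clauseVar C ⊆ var F :=
  fun v hv => Finset.mem_biUnion.2 ⟨C, hC, hv⟩

/-- a full clause is falsified only at its point -/
lemma eq_pt_of_fals {C : Finset ℤ} (hC : IsClause C) (hfull : clauseVar C = var F)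
    {t : VV F → Bool} (hf : fals F t C) : t = pt F C := by
  funext v
  have hv : v.1 ∈ clauseVar C := by rw [hfull]; exact v.2
  rcases Finset.mem_image.1 hv with ⟨x, hxC, hxv⟩
  have hx0 : x ≠ 0 := natAbs_ne_zero_of_clause hC hxC
  have hlit := hf x hxC
  unfold litT at hlit
  have h : x.natAbs ∈ var F := by rw [hxv]; exact v.2
  rw [dif_pos h] at hlit
  have hveq : (⟨x.natAbs, h⟩ : VV F) = v := Subtype.ext hxv
  rw [hveq] at hlit
  unfold pt
  rcases lt_or_gt_of_ne hx0 with h' | h'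
  · -- x < 0 : x = -(v:ℤ), pt v = true, t v = true
    have h1 : -((v.1 : ℕ) : ℤ) = x := by omega
    rw [h1]
    have e1 : decide (x ∈ C) = true := by simpa using hxC
    have e2 : decide (0 < x) = false := by simp; omega
    rw [e2] at hlit
    rw [e1]
    cases htv : t v <;> rw [htv] at hlit <;> simp_all
  · -- x > 0 : pt v = false, t v = false
    have h1 : -((v.1 : ℕ) : ℤ) = -x := by omega
    rw [h1]
    have e1 : decide ((-x) ∈ C) = false := by simpa using hC.2 x hxC
    have e2 : decide (0 < x) = true := by simpa using h'
    rw [e2] at hlit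
    rw [e1]
    cases htv : t v <;> rw [htv] at hlit <;> simp_all


/-- privacy from MinUnsat -/
lemma priv_MU (hCS : IsClauseSet F) (hMU : MinUnsat F) :
    ∀ C ∈ F, ∃ t : VV F → Bool, fals F t C ∧ ∀ D ∈ F, D ≠ C → ¬ fals F t D := by
  intro C hC
  obtain ⟨A, hA, hint⟩ := hMU.2 (F.erase C) (Finset.erase_ssubset hC)
  have hnot : ∀ D ∈ F, D ≠ C → ¬ fals F (fun v => decide ((v.1 : ℤ) ∈ A)) D := by
    intro D hD hDC hf
    obtain ⟨x, hx⟩ := hint D (Finset.mem_erase.2 ⟨hDC, hD⟩)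
    have hxA : x ∈ A := (Finset.mem_inter.1 hx).1
    have hxD : x ∈ D := (Finset.mem_inter.1 hx).2
    have hT : litT F (fun v => decide ((v.1 : ℤ) ∈ A)) x = true :=
      litT_asg hA hxA (mem_var_of_mem hD hxD)
    rw [hf x hxD] at hT
    exact Bool.false_ne_true hT
  obtain ⟨D, hD, hfD⟩ := allFals hCS hMU.1 (fun v => decide ((v.1 : ℤ) ∈ A))
  by_cases hDC : D = C
  · exact ⟨_, hDC ▸ hfD, hnot⟩
  · exact absurd hfD (hnot D hD hDC)

/-- privacy from hitting + unsat -/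
lemma priv_hit (hCS : IsClauseSet F) (hH : Hitting F) :
    ∀ C ∈ F, ∃ t : VV F → Bool, fals F t C ∧ ∀ D ∈ F, D ≠ C → ¬ fals F t D := by
  intro C hC
  refine ⟨pt F C, fals_pt (hCS C hC) (clauseVar_subset hC), ?_⟩
  intro D hD hDC hf
  obtain ⟨x, hxC, hxD⟩ := hH C hC D hD (fun h => hDC h.symm)
  have h1 : litT F (pt F C) x = false := fals_pt (hCS C hC) (clauseVar_subset hC) x hxC
  have h2 : litT F (pt F C) (-x) = false := hf (-x) hxD
  rw [litT_neg (natAbs_ne_zero_of_clause (hCS C hC) hxC) (mem_var_of_mem hC hxC), h1] at h2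
  simp at h2

/-- pt is injective on full clauses -/
lemma pt_inj {C D : Finset ℤ} (hC : C ∈ F) (hD : D ∈ F) (hCS : IsClauseSet F)
    (hfC : clauseVar C = var F) (hfD : clauseVar D = var F)
    (hpt : pt F C = pt F D) : C = D := by
  have key : ∀ (C' D' : Finset ℤ), C' ∈ F → D' ∈ F → clauseVar C' = var F →
      clauseVar D' = var F → pt F C' = pt F D' → C' ⊆ D' := by
    intro C' D' hC' hD' hfC' hfD' hpt' x hxC
    have hx0 : x ≠ 0 := natAbs_ne_zero_of_clause (hCS C' hC') hxC
    have hvar : x.natAbs ∈ var F := mem_var_of_mem hC' hxC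
    have hvD : x.natAbs ∈ clauseVar D' := by rw [hfD']; exact hvar
    rcases Finset.mem_image.1 hvD with ⟨y, hyD, hyx⟩
    have hy0 : y ≠ 0 := natAbs_ne_zero_of_clause (hCS D' hD') hyD
    have hxy : y = x ∨ y = -x := by omega
    rcases hxy with rfl | rfl
    · exact hyD
    · exfalso
      have h1 : litT F (pt F C') x = false :=
        fals_pt (hCS C' hC') (clauseVar_subset hC') x hxC
      have h2 : litT F (pt F D') (-x) = false :=
        fals_pt (hCS D' hD') (clauseVar_subset hD') (-x) hyD
      rw [← hpt', litT_neg hx0 hvar, h1] at h2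
      simp at h2
  exact Finset.Subset.antisymm (key C D hC hD hfC hfD hpt) (key D C hD hC hfD hfC hpt.symm)


/-! ### the weight function psi and the edge bound -/

def psi : ℕ → ℕ
  | 0 => 0
  | 1 => 0
  | 2 => 2
  | 3 => 4
  | 4 => 8
  | 5 => 10
  | 6 => 14
  | 7 => 18
  | 8 => 24
  | 9 => 26
  | 10 => 30
  | (n+11) => (n+11)*(n+11) - 7*(n+11) - 2

lemma psi_big {s : ℕ} (h : 11 ≤ s) : psi s = s*s - 7*s - 2 := by
  obtain ⟨n, rfl⟩ : ∃ n, s = n + 11 := ⟨s - 11, by omega⟩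
  rfl

lemma psi_small : ∀ a, a ≤ 10 → psi a ≤ 3*a := by decide

lemma psi_add_aux : ∀ a b : ℕ, a ≤ b → psi a + psi b + 2*a ≤ psi (a+b) := by
  intro a b hab
  by_cases hb : b ≤ 10
  · have H : ∀ b, b ≤ 10 → ∀ a, a ≤ b → psi a + psi b + 2*a ≤ psi (a+b) := by decide
    exact H b hb a hab
  · push_neg at hb
    have hb' : 11 ≤ b := hb
    have hsb : 11 ≤ a + b := by omega
    have hbb : 11*b ≤ b*b := Nat.mul_le_mul_right b hb'
    have hss : 11*(a+b) ≤ (a+b)*(a+b) := Nat.mul_le_mul_right _ hsb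
    have hexp : (a+b)*(a+b) = a*a + 2*(a*b) + b*b := by ring
    rw [psi_big hb', psi_big hsb]
    rcases Nat.eq_zero_or_pos a with rfl | ha
    · simp [psi]
    by_cases ha10 : a ≤ 10
    · have h1 := psi_small a ha10
      have h2 : 22*a ≤ 2*(a*b) := by
        calc 22*a = a*22 := by ring
        _ ≤ a*(2*b) := Nat.mul_le_mul_left a (by omega)
        _ = 2*(a*b) := by ring
      omega
    · push_neg at ha10
      have ha' : 11 ≤ a := ha10
      have haa : 11*a ≤ a*a := Nat.mul_le_mul_right a ha'
      rw [psi_big ha']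
      have h2 : a*1 ≤ a*b := Nat.mul_le_mul_left a (by omega)
      omega

lemma psi_add (a b : ℕ) : psi a + psi b + 2 * min a b ≤ psi (a+b) := by
  rcases le_total a b with h | h
  · rw [min_eq_left h]; exact psi_add_aux a b h
  · rw [min_eq_right h, Nat.add_comm (psi a), Nat.add_comm a b]
    exact psi_add_aux b a h


/-! ### the edge-count bound -/

variable {α : Type} [Fintype α] [DecidableEq α]

def flpa (v : α) (t : α → Bool) : α → Bool := Function.update t v (!(t v))

lemma flpa_apply_ne {v w : α} (t : α → Bool) (h : w ≠ v) : flpa v t w = t w :=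
  Function.update_of_ne h _ t

lemma flpa_apply_eq (v : α) (t : α → Bool) : flpa v t v = !(t v) :=
  Function.update_self v _ t

lemma flpa_flpa (v : α) (t : α → Bool) : flpa v (flpa v t) = t := by
  funext w
  by_cases h : w = v
  · subst h; rw [flpa_apply_eq, flpa_apply_eq]; cases t w <;> rfl
  · rw [flpa_apply_ne _ h, flpa_apply_ne _ h]

lemma flpa_ne (v : α) (t : α → Bool) : flpa v t ≠ t := by
  intro h
  have := congrFun h v
  rw [flpa_apply_eq] at this
  cases htv : t v <;> rw [htv] at this <;> simp_all

/-- internal flip-pairs of S -/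
def Ipairs (S : Finset (α → Bool)) : Finset ((α → Bool) × α) :=
  (S ×ˢ (Finset.univ : Finset α)).filter (fun pv => flpa pv.2 pv.1 ∈ S)

lemma mem_Ipairs {S : Finset (α → Bool)} {p : α → Bool} {v : α} :
    (p, v) ∈ Ipairs S ↔ p ∈ S ∧ flpa v p ∈ S := by
  unfold Ipairs
  rw [Finset.mem_filter, Finset.mem_product]
  simp only [Finset.mem_univ, and_true]

lemma Ipairs_bound : ∀ (S : Finset (α → Bool)), (Ipairs S).card ≤ psi S.card := by
  intro S
  induction S using Finset.strongInduction with
  | _ S ih =>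
  by_cases hcard : S.card ≤ 1
  · have hemp : Ipairs S = ∅ := by
      rw [Finset.eq_empty_iff_forall_notMem]
      rintro ⟨p, v⟩ hpv
      rw [mem_Ipairs] at hpv
      have hne : flpa v p ≠ p := flpa_ne v p
      have : 2 ≤ S.card := Finset.one_lt_card.2 ⟨_, hpv.2, _, hpv.1, hne⟩
      omega
    rw [hemp]
    simp
  · push_neg at hcard
    obtain ⟨p0, hp0, q0, hq0, hpq⟩ := Finset.one_lt_card.1 hcard
    obtain ⟨v0, hv0⟩ := Function.ne_iff.1 hpq
    set S0 := S.filter (fun t => t v0 = false) with hS0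
    set S1 := S.filter (fun t => t v0 = true) with hS1
    have hS0sub : S0 ⊆ S := Finset.filter_subset _ _
    have hS1sub : S1 ⊆ S := Finset.filter_subset _ _
    have hmemS0 : ∀ t, t ∈ S0 ↔ t ∈ S ∧ t v0 = false := fun t => Finset.mem_filter
    have hmemS1 : ∀ t, t ∈ S1 ↔ t ∈ S ∧ t v0 = true := fun t => Finset.mem_filter
    have hS1' : S1 = S.filter (fun t => ¬ t v0 = false) := by
      rw [hS1]
      apply Finset.filter_congr
      intro t _
      simp
    have hcards : S0.card + S1.card = S.card := by
      rw [hS0, hS1']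
      exact Finset.card_filter_add_card_filter_not _
    have hS0ne : S0.Nonempty := by
      cases hp : p0 v0
      · exact ⟨p0, (hmemS0 p0).2 ⟨hp0, hp⟩⟩
      · cases hq : q0 v0
        · exact ⟨q0, (hmemS0 q0).2 ⟨hq0, hq⟩⟩
        · exact absurd (hp.trans hq.symm) hv0
    have hS1ne : S1.Nonempty := by
      cases hp : p0 v0
      · cases hq : q0 v0
        · exact absurd (hp.trans hq.symm) hv0
        · exact ⟨q0, (hmemS1 q0).2 ⟨hq0, hq⟩⟩
      · exact ⟨p0, (hmemS1 p0).2 ⟨hp0, hp⟩⟩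
    have hS0lt : S0 ⊂ S := by
      refine Finset.ssubset_iff_of_subset hS0sub |>.2 ?_
      obtain ⟨t, ht⟩ := hS1ne
      refine ⟨t, hS1sub ht, fun hc => ?_⟩
      have h1 := ((hmemS0 t).1 hc).2
      have h2 := ((hmemS1 t).1 ht).2
      rw [h1] at h2
      exact Bool.false_ne_true h2
    have hS1lt : S1 ⊂ S := by
      refine Finset.ssubset_iff_of_subset hS1sub |>.2 ?_
      obtain ⟨t, ht⟩ := hS0ne
      refine ⟨t, hS0sub ht, fun hc => ?_⟩
      have h1 := ((hmemS1 t).1 hc).2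
      have h2 := ((hmemS0 t).1 ht).2
      rw [h2] at h1
      exact Bool.false_ne_true h1
    -- split Ipairs S into three parts
    have hsplit1 : (Ipairs S).card =
        ((Ipairs S).filter (fun pv => pv.2 = v0)).card +
        ((Ipairs S).filter (fun pv => ¬ pv.2 = v0)).card :=
      (Finset.card_filter_add_card_filter_not _).symm
    have hsplit2 : ((Ipairs S).filter (fun pv => ¬ pv.2 = v0)).card =
        (((Ipairs S).filter (fun pv => ¬ pv.2 = v0)).filter (fun pv => pv.1 v0 = false)).card +
        (((Ipairs S).filter (fun pv => ¬ pv.2 = v0)).filter (fun pv => ¬ pv.1 v0 = false)).card :=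
      (Finset.card_filter_add_card_filter_not _).symm
    -- part B equals Ipairs S0
    have hIB : ((Ipairs S).filter (fun pv => ¬ pv.2 = v0)).filter (fun pv => pv.1 v0 = false)
        = Ipairs S0 := by
      ext ⟨p, v⟩
      rw [Finset.mem_filter, Finset.mem_filter, mem_Ipairs, mem_Ipairs, hmemS0, hmemS0]
      constructor
      · rintro ⟨⟨⟨hpS, hflS⟩, hvne⟩, hpv0⟩
        refine ⟨⟨hpS, hpv0⟩, hflS, ?_⟩
        rw [flpa_apply_ne _ (fun h => hvne h.symm)]
        exact hpv0
      · rintro ⟨⟨hpS, hpv0⟩, hflS, hflv0⟩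
        have hvne : ¬ (⟨p, v⟩ : (α → Bool) × α).2 = v0 := by
          intro h
          dsimp only at h
          subst h
          rw [flpa_apply_eq, hpv0] at hflv0
          exact Bool.false_ne_true hflv0.symm
        exact ⟨⟨⟨hpS, hflS⟩, hvne⟩, hpv0⟩
    have hIC : ((Ipairs S).filter (fun pv => ¬ pv.2 = v0)).filter (fun pv => ¬ pv.1 v0 = false)
        = Ipairs S1 := by
      ext ⟨p, v⟩
      rw [Finset.mem_filter, Finset.mem_filter, mem_Ipairs, mem_Ipairs, hmemS1, hmemS1]
      simp only [Bool.not_eq_false]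
      constructor
      · rintro ⟨⟨⟨hpS, hflS⟩, hvne⟩, hpv0⟩
        refine ⟨⟨hpS, hpv0⟩, hflS, ?_⟩
        rw [flpa_apply_ne _ (fun h => hvne h.symm)]
        exact hpv0
      · rintro ⟨⟨hpS, hpv0⟩, hflS, hflv0⟩
        have hvne : ¬ (⟨p, v⟩ : (α → Bool) × α).2 = v0 := by
          intro h
          dsimp only at h
          subst h
          rw [flpa_apply_eq, hpv0] at hflv0
          exact Bool.false_ne_true hflv0
        exact ⟨⟨⟨hpS, hflS⟩, hvne⟩, hpv0⟩
    -- part A: matched pairs across v0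
    have hIA : ((Ipairs S).filter (fun pv => pv.2 = v0)).card
        ≤ 2 * min S0.card S1.card := by
      set M0 := S0.filter (fun p => flpa v0 p ∈ S) with hM0
      set M1 := S1.filter (fun p => flpa v0 p ∈ S) with hM1
      have hMsum : ((Ipairs S).filter (fun pv => pv.2 = v0)).card = M0.card + M1.card := by
        have hbij : ((Ipairs S).filter (fun pv => pv.2 = v0)).card
            = (S.filter (fun p => flpa v0 p ∈ S)).card := by
          apply Finset.card_bij (fun pv _ => pv.1)
          · rintro ⟨p, v⟩ hpv
            rw [Finset.mem_filter, mem_Ipairs] at hpv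
            obtain ⟨⟨hpS, hfl⟩, hv⟩ := hpv
            dsimp only at hv
            subst hv
            exact Finset.mem_filter.2 ⟨hpS, hfl⟩
          · rintro ⟨p, v⟩ hpv ⟨p', v'⟩ hpv' h
            rw [Finset.mem_filter] at hpv hpv'
            have hv := hpv.2
            have hv' := hpv'.2
            dsimp only at h hv hv'
            rw [Prod.mk.injEq]
            exact ⟨h, hv.trans hv'.symm⟩
          · intro p hp
            rw [Finset.mem_filter] at hp
            exact ⟨⟨p, v0⟩, Finset.mem_filter.2 ⟨mem_Ipairs.2 ⟨hp.1, hp.2⟩, rfl⟩, rfl⟩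
        rw [hbij]
        have e0 : M0 = (S.filter (fun p => flpa v0 p ∈ S)).filter (fun t => t v0 = false) := by
          rw [hM0, hS0]
          ext t
          rw [Finset.mem_filter, Finset.mem_filter, Finset.mem_filter, Finset.mem_filter]
          tauto
        have e1 : M1 = (S.filter (fun p => flpa v0 p ∈ S)).filter (fun t => ¬ t v0 = false) := by
          rw [hM1, hS1]
          ext t
          rw [Finset.mem_filter, Finset.mem_filter, Finset.mem_filter, Finset.mem_filter]
          simp only [Bool.not_eq_false]
          tauto
        rw [e0, e1]
        exact (Finset.card_filter_add_card_filter_not _).symm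
      have hM01 : M0.card = M1.card := by
        apply Finset.card_bij (fun p _ => flpa v0 p)
        · intro p hp
          rw [hM0, Finset.mem_filter, hmemS0] at hp
          obtain ⟨⟨hpS, hpv⟩, hfl⟩ := hp
          rw [hM1, Finset.mem_filter, hmemS1]
          refine ⟨⟨hfl, by rw [flpa_apply_eq, hpv]; rfl⟩, by rw [flpa_flpa]; exact hpS⟩
        · intro p hp p' hp' h
          have := congrArg (flpa v0) h
          rwa [flpa_flpa, flpa_flpa] at this
        · intro q hq
          rw [hM1, Finset.mem_filter, hmemS1] at hq
          obtain ⟨⟨hqS, hqv⟩, hfl⟩ := hq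
          refine ⟨flpa v0 q, ?_, flpa_flpa v0 q⟩
          rw [hM0, Finset.mem_filter, hmemS0]
          refine ⟨⟨hfl, by rw [flpa_apply_eq, hqv]; rfl⟩, by rw [flpa_flpa]; exact hqS⟩
      have hM0le : M0.card ≤ S0.card := Finset.card_le_card (Finset.filter_subset _ _)
      have hM1le : M1.card ≤ S1.card := Finset.card_le_card (Finset.filter_subset _ _)
      rw [hMsum]
      rcases le_total S0.card S1.card with h | h
      · rw [min_eq_left h]; omega
      · rw [min_eq_right h]; omega
    have hrec0 := ih S0 hS0lt
    have hrec1 := ih S1 hS1lt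
    have hpa := psi_add S0.card S1.card
    rw [hcards] at hpa
    have hIBc := congrArg Finset.card hIB
    have hICc := congrArg Finset.card hIC
    omega

/-- no cross flips between parts gives additivity bound -/
lemma Ipairs_bound_split (S S1 S2 : Finset (α → Bool)) (hUnion : ∀ p ∈ S, p ∈ S1 ∨ p ∈ S2)
    (hnocross : ∀ p ∈ S1, ∀ v : α, flpa v p ∉ S2) :
    (Ipairs S).card ≤ psi S1.card + psi S2.card := by
  have hsub : Ipairs S ⊆ Ipairs S1 ∪ Ipairs S2 := by
    rintro ⟨p, v⟩ hpv
    rw [mem_Ipairs] at hpv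
    obtain ⟨hpS, hfl⟩ := hpv
    rcases hUnion p hpS with hp1 | hp2
    · have hfl1 : flpa v p ∈ S1 := by
        rcases hUnion _ hfl with h | h
        · exact h
        · exact absurd h (hnocross p hp1 v)
      exact Finset.mem_union_left _ (mem_Ipairs.2 ⟨hp1, hfl1⟩)
    · have hfl2 : flpa v p ∈ S2 := by
        rcases hUnion _ hfl with h | h
        · exfalso
          have hnc : flpa v (flpa v p) ∉ S2 := hnocross _ h v
          rw [flpa_flpa] at hnc
          exact hnc hp2
        · exact h
      exact Finset.mem_union_right _ (mem_Ipairs.2 ⟨hp2, hfl2⟩)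
  calc (Ipairs S).card ≤ (Ipairs S1 ∪ Ipairs S2).card := Finset.card_le_card hsub
    _ ≤ (Ipairs S1).card + (Ipairs S2).card := Finset.card_union_le _ _
    _ ≤ psi S1.card + psi S2.card := Nat.add_le_add (Ipairs_bound S1) (Ipairs_bound S2)


/-! ### helper lemmas on unique true literals -/

section Helpers

variable {F : Finset (Finset ℤ)}

lemma not_fals_iff {t : VV F → Bool} {D : Finset ℤ} :
    ¬ fals F t D ↔ ∃ x ∈ D, litT F t x = true := by
  unfold fals
  push_neg
  constructor
  · rintro ⟨x, hx, hlit⟩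
    refine ⟨x, hx, ?_⟩
    cases h : litT F t x
    · exact absurd h hlit
    · rfl
  · rintro ⟨x, hx, hlit⟩
    refine ⟨x, hx, ?_⟩
    rw [hlit]
    exact fun h => Bool.false_ne_true h.symm

lemma litT_flpa_ne' {t : VV F → Bool} {v : VV F} {x : ℤ} (hne : x.natAbs ≠ v.1) :
    litT F (flpa v t) x = litT F t x :=
  litT_flp_ne hne

lemma litT_flpa_eq' {t : VV F → Bool} {v : VV F} {x : ℤ} (hx : x.natAbs = v.1) :
    litT F (flpa v t) x = !litT F t x :=
  litT_flp_eq hx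

/-- if t does not falsify D but a flip at v does, then v is determined -/
lemma uniq_flip {t : VV F → Bool} {v v' : VV F} {D : Finset ℤ}
    (hnf : ¬ fals F t D) (h1 : fals F (flpa v t) D) (h2 : fals F (flpa v' t) D) :
    v = v' := by
  obtain ⟨x, hxD, hxT⟩ := not_fals_iff.1 hnf
  have hv : x.natAbs = v.1 := by
    by_contra hne
    have := h1 x hxD
    rw [litT_flpa_ne' hne, hxT] at this
    exact Bool.false_ne_true this.symm
  have hv' : x.natAbs = v'.1 := by
    by_contra hne
    have := h2 x hxD
    rw [litT_flpa_ne' hne, hxT] at this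
    exact Bool.false_ne_true this.symm
  exact Subtype.ext (hv ▸ hv')

/-- structure of the unique true literal -/
lemma truelit {t : VV F → Bool} {v : VV F} {D : Finset ℤ} (hD : IsClause D)
    (hnf : ¬ fals F t D) (h1 : fals F (flpa v t) D) :
    ∃ x ∈ D, litT F t x = true ∧ x.natAbs = v.1 ∧
      ∀ y ∈ D, y ≠ x → litT F t y = false := by
  obtain ⟨x, hxD, hxT⟩ := not_fals_iff.1 hnf
  have hv : x.natAbs = v.1 := by
    by_contra hne
    have := h1 x hxD
    rw [litT_flpa_ne' hne, hxT] at this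
    exact Bool.false_ne_true this.symm
  refine ⟨x, hxD, hxT, hv, ?_⟩
  intro y hyD hyx
  by_cases hy : y.natAbs = v.1
  · exfalso
    have hxy : y = x ∨ y = -x := by
      have h1 : y.natAbs = x.natAbs := hy.trans hv.symm
      omega
    rcases hxy with rfl | rfl
    · exact hyx rfl
    · exact hD.2 x hxD (by simpa using hyD)
  · have := h1 y hyD
    rwa [litT_flpa_ne' hy] at this

/-- the unique true literal propagates to adjacent non-falsifying points -/
lemma adj_truelit {p : VV F → Bool} {v : VV F} {D : Finset ℤ} (hD : IsClause D)
    (hnf' : ¬ fals F (flpa v p) D) {x : ℤ} (hxD : x ∈ D) (hxT : litT F p x = true)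
    (hothers : ∀ y ∈ D, y ≠ x → litT F p y = false) :
    litT F (flpa v p) x = true := by
  by_cases hv : x.natAbs = v.1
  · exfalso
    apply hnf'
    intro y hyD
    by_cases hyx : y = x
    · subst hyx
      rw [litT_flpa_eq' hv, hxT]
      rfl
    · by_cases hy : y.natAbs = v.1
      · exfalso
        have hxy : y = x ∨ y = -x := by
          have : y.natAbs = x.natAbs := hy.trans hv.symm
          omega
        rcases hxy with rfl | rfl
        · exact hyx rfl
        · exact hD.2 x hxD (by simpa using hyD)
      · rw [litT_flpa_ne' hy]
        exact hothers y hyD hyx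
  · rw [litT_flpa_ne' hv]
    exact hxT

end Helpers


/-! ### the master upper-bound theorem -/

theorem master (F : Finset (Finset ℤ)) (hCS : IsClauseSet F) (hU : ¬ Satisfiable F)
    (hpriv : ∀ C ∈ F, ∃ t : VV F → Bool, fals F t C ∧ ∀ D ∈ F, D ≠ C → ¬ fals F t D)
    (hdef : deficiency F = 7) : nfc F ≤ 9 := by
  classical
  by_contra hcon
  push_neg at hcon
  set n := (var F).card with hn
  have hc : F.card = n + 7 := by
    unfold deficiency numVar at hdef
    omega
  set Ffull := F.filter (fun C => clauseVar C = var F) with hFfull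
  set Fnon := F.filter (fun C => ¬ clauseVar C = var F) with hFnon
  set s := Ffull.card with hs
  have hs10 : 10 ≤ s := by
    unfold nfc at hcon
    rw [← hFfull] at hcon
    omega
  have hmns : Fnon.card + s = n + 7 := by
    have h := Finset.card_filter_add_card_filter_not
      (s := F) (p := fun C => clauseVar C = var F)
    rw [← hFfull, ← hFnon] at h
    omega
  set S := Ffull.image (pt F) with hS
  have hfullmem : ∀ C ∈ Ffull, C ∈ F ∧ clauseVar C = var F := fun C hC => Finset.mem_filter.1 hC
  have hnonmem : ∀ D ∈ Fnon, D ∈ F ∧ ¬ clauseVar D = var F := fun D hD => Finset.mem_filter.1 hD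
  have hptpriv : ∀ C ∈ Ffull, ∀ D ∈ F, D ≠ C → ¬ fals F (pt F C) D := by
    intro C hC D hD hne
    obtain ⟨hCF, hCfull⟩ := hfullmem C hC
    obtain ⟨t, ht1, ht2⟩ := hpriv C hCF
    have het : t = pt F C := eq_pt_of_fals (hCS C hCF) hCfull ht1
    exact het ▸ ht2 D hD hne
  have hSinj : Set.InjOn (pt F) Ffull := fun C hC D hD h =>
    pt_inj (hfullmem C hC).1 (hfullmem D hD).1 hCS (hfullmem C hC).2 (hfullmem D hD).2 h
  have hcardS : S.card = s := Finset.card_image_of_injOn hSinj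
  have hSpriv : ∀ p ∈ S, ∀ D ∈ Fnon, ¬ fals F p D := by
    intro p hp D hD
    obtain ⟨C, hC, hpe⟩ := Finset.mem_image.1 hp
    have hne : D ≠ C := by
      intro h
      exact (hnonmem D hD).2 (h ▸ (hfullmem C hC).2)
    exact hpe ▸ hptpriv C hC D (hnonmem D hD).1 hne
  have hBex : ∀ (t : VV F → Bool), t ∉ S → ∃ D ∈ Fnon, fals F t D := by
    intro t ht
    obtain ⟨D, hD, hfD⟩ := allFals hCS hU t
    by_cases hDfull : clauseVar D = var F
    · exfalso
      have : t = pt F D := eq_pt_of_fals (hCS D hD) hDfull hfD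
      exact ht (this ▸ Finset.mem_image.2 ⟨D, Finset.mem_filter.2 ⟨hD, hDfull⟩, rfl⟩)
    · exact ⟨D, Finset.mem_filter.2 ⟨hD, hDfull⟩, hfD⟩
  -- the pair counting
  set IP := Ipairs S with hIP
  set BP := (S ×ˢ (Finset.univ : Finset (VV F))).filter
    (fun pv => ¬ flpa pv.2 pv.1 ∈ S) with hBP
  have hPsplit : IP.card + BP.card = s * n := by
    have h1 : (S ×ˢ (Finset.univ : Finset (VV F))).card = s * n := by
      rw [Finset.card_product, hcardS, Finset.card_univ, Fintype.card_coe]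
    rw [← h1, hIP, hBP]
    exact Finset.card_filter_add_card_filter_not
      (s := S ×ˢ Finset.univ) (p := fun pv => flpa pv.2 pv.1 ∈ S)
  have hBex' : ∀ pv ∈ BP, ∃ D ∈ Fnon, fals F (flpa pv.2 pv.1) D := by
    rintro ⟨p, v⟩ hpv
    rw [hBP, Finset.mem_filter] at hpv
    exact hBex _ hpv.2
  set f : ((VV F → Bool) × VV F) → Finset ℤ := fun pv =>
    if h : ∃ D ∈ Fnon, fals F (flpa pv.2 pv.1) D then h.choose else ∅ with hf
  have hfmem : ∀ pv ∈ BP, f pv ∈ Fnon ∧ fals F (flpa pv.2 pv.1) (f pv) := by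
    intro pv hpv
    have h := hBex' pv hpv
    rw [hf]
    dsimp only
    rw [dif_pos h]
    exact ⟨h.choose_spec.1, h.choose_spec.2⟩
  have hBPfib : BP.card = ∑ D ∈ Fnon, (BP.filter (fun pv => f pv = D)).card :=
    Finset.card_eq_sum_card_fiberwise (fun pv hpv => (hfmem pv hpv).1)
  have hBPmemS : ∀ pv ∈ BP, pv.1 ∈ S := by
    rintro ⟨p, v⟩ hpv
    rw [hBP, Finset.mem_filter, Finset.mem_product] at hpv
    exact hpv.1.1
  have hfible : ∀ D ∈ Fnon, (BP.filter (fun pv => f pv = D)).card ≤ s := by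
    intro D hD
    rw [← hcardS]
    apply Finset.card_le_card_of_injOn (fun pv => pv.1)
    · intro pv hpv
      exact hBPmemS pv (Finset.mem_filter.1 hpv).1
    · rintro ⟨p, v⟩ hpv ⟨p', v'⟩ hpv' h
      simp only [Finset.coe_filter, Set.mem_setOf_eq] at hpv hpv'
      dsimp only at h
      have hp1 : fals F (flpa v p) D := by
        have := (hfmem _ hpv.1).2
        rwa [hpv.2] at this
      have hp2 : fals F (flpa v' p') D := by
        have := (hfmem _ hpv'.1).2
        rwa [hpv'.2] at this
      subst h
      have hnf : ¬ fals F p D := hSpriv p (hBPmemS _ hpv.1) D hD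
      have := uniq_flip hnf hp1 hp2
      rw [this]
  have hBPle : BP.card ≤ Fnon.card * s := by
    rw [hBPfib]
    calc ∑ D ∈ Fnon, (BP.filter (fun pv => f pv = D)).card
        ≤ ∑ _D ∈ Fnon, s := Finset.sum_le_sum hfible
      _ = Fnon.card * s := by rw [Finset.sum_const, smul_eq_mul]
  have hIPle : IP.card ≤ psi s := by
    rw [hIP, ← hcardS]
    exact Ipairs_bound S
  -- n is at least 4
  have hn4 : 4 ≤ n := by
    have h1 : S.card ≤ Fintype.card (VV F → Bool) := Finset.card_le_univ S
    rw [hcardS, Fintype.card_fun, Fintype.card_bool, Fintype.card_coe, ← hn] at h1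
    by_contra hn3
    push_neg at hn3
    have : (2:ℕ) ^ n ≤ 2 ^ 3 := Nat.pow_le_pow_right (by norm_num) (by omega)
    omega
  by_cases hs11 : 11 ≤ s
  · -- quadratic counting kills s ≥ 11
    have hq : 11 * s ≤ s * s := Nat.mul_le_mul_right s hs11
    have hpsval : psi s + (7 * s + 2) = s * s := by
      rw [psi_big hs11]
      omega
    have e1 : (Fnon.card + s) * s = Fnon.card * s + s * s := by ring
    have e2 : (n + 7) * s = n * s + 7 * s := by ring
    have e3 : s * n = n * s := by ring
    have e4 : (Fnon.card + s) * s = (n + 7) * s := by rw [hmns]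
    have hns2 : 2 ≤ n * s := by
      calc 2 ≤ 4 * 10 := by norm_num
      _ ≤ n * s := Nat.mul_le_mul hn4 hs10
    omega
  · -- critical case s = 10
    have hseq : s = 10 := by omega
    have hm3 : Fnon.card = n - 3 := by omega
    have hpsi10 : psi 10 = 30 := by decide
    have h3n : 3 ≤ n := by omega
    have h1 : Fnon.card * s + 30 = s * n := by
      rw [hseq, hm3]
      omega
    have hIPle' : IP.card ≤ 30 := by
      rw [hseq, hpsi10] at hIPle
      exact hIPle
    have hIPeq : IP.card = 30 := by omega
    have hBPeq : BP.card = Fnon.card * s := by omega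
    -- fibers are full
    have hfibeq : ∀ D ∈ Fnon, (BP.filter (fun pv => f pv = D)).card = s := by
      by_contra hne
      push_neg at hne
      obtain ⟨D0, hD0, hne0⟩ := hne
      have hlt : (BP.filter (fun pv => f pv = D0)).card < s :=
        lt_of_le_of_ne (hfible D0 hD0) hne0
      have : ∑ D ∈ Fnon, (BP.filter (fun pv => f pv = D)).card < ∑ _D ∈ Fnon, s :=
        Finset.sum_lt_sum (fun D hD => hfible D hD) ⟨D0, hD0, hlt⟩
      rw [Finset.sum_const, smul_eq_mul] at this
      omega
    -- surjectivity of fibers onto S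
    have hsurj : ∀ D ∈ Fnon, ∀ p ∈ S, ∃ v, (p, v) ∈ BP ∧ f (p, v) = D := by
      intro D hD p hp
      have hinj : Set.InjOn (fun pv : (VV F → Bool) × VV F => pv.1)
          ↑(BP.filter (fun pv => f pv = D)) := by
        rintro ⟨p1, v1⟩ hpv ⟨p1', v1'⟩ hpv' h
        simp only [Finset.coe_filter, Set.mem_setOf_eq] at hpv hpv'
        dsimp only at h
        have hp1 : fals F (flpa v1 p1) D := by
          have := (hfmem _ hpv.1).2
          rwa [hpv.2] at this
        have hp2 : fals F (flpa v1' p1') D := by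
          have := (hfmem _ hpv'.1).2
          rwa [hpv'.2] at this
        subst h
        have hnf : ¬ fals F p1 D := hSpriv p1 (hBPmemS _ hpv.1) D hD
        have := uniq_flip hnf hp1 hp2
        rw [this]
      have himg : ((BP.filter (fun pv => f pv = D)).image (fun pv => pv.1)) = S := by
        apply Finset.eq_of_subset_of_card_le
        · intro q hq
          obtain ⟨pv, hpv, hq'⟩ := Finset.mem_image.1 hq
          exact hq' ▸ hBPmemS pv (Finset.mem_filter.1 hpv).1
        · rw [Finset.card_image_of_injOn hinj, hfibeq D hD, hcardS]
      rw [← himg] at hp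
      obtain ⟨⟨p1, v1⟩, hmem, hep⟩ := Finset.mem_image.1 hp
      dsimp only at hep
      subst hep
      rw [Finset.mem_filter] at hmem
      exact ⟨v1, hmem.1, hmem.2⟩
    -- every nonfull clause has a literal true on all of S
    have hSne : S.Nonempty := by
      rw [← Finset.card_pos, hcardS]
      omega
    obtain ⟨p₀, hp₀S⟩ := hSne
    have hcommon : ∀ D ∈ Fnon, ∃ x ∈ D, ∀ p ∈ S, litT F p x = true := by
      intro D hD
      obtain ⟨hDF, hDnf⟩ := Finset.mem_filter.1 hD
      have hDcl : IsClause D := hCS D hDF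
      have huniq : ∀ p ∈ S, ∃ x ∈ D, litT F p x = true ∧
          ∀ y ∈ D, y ≠ x → litT F p y = false := by
        intro p hp
        obtain ⟨v, hBPv, hfv⟩ := hsurj D hD p hp
        have hfals : fals F (flpa v p) D := by
          have := (hfmem _ hBPv).2
          rwa [hfv] at this
        have hnf : ¬ fals F p D := hSpriv p hp D hD
        obtain ⟨x, h1, h2, _h3, h4⟩ := truelit hDcl hnf hfals
        exact ⟨x, h1, h2, h4⟩
      obtain ⟨x₀, hx₀D, hx₀T, hx₀o⟩ := huniq p₀ hp₀S
      refine ⟨x₀, hx₀D, ?_⟩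
      by_contra hbad
      push_neg at hbad
      obtain ⟨q₀, hq₀S, hq₀⟩ := hbad
      set S1 := S.filter (fun p => litT F p x₀ = true) with hS1d
      set S2 := S.filter (fun p => ¬ litT F p x₀ = true) with hS2d
      have hnocross : ∀ p ∈ S1, ∀ v : VV F, flpa v p ∉ S2 := by
        intro p hp1 v hmem2
        rw [hS2d, Finset.mem_filter] at hmem2
        rw [hS1d, Finset.mem_filter] at hp1
        obtain ⟨hpS, hpT⟩ := hp1
        obtain ⟨hpS', hpT'⟩ := hmem2
        obtain ⟨x, hxD, hxT, hxo⟩ := huniq p hpS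
        have hxeq : x = x₀ := by
          by_contra hne
          have := hxo x₀ hx₀D (fun h => hne h.symm)
          rw [hpT] at this
          exact Bool.false_ne_true this.symm
        subst hxeq
        have hnf' : ¬ fals F (flpa v p) D := hSpriv _ hpS' D hD
        exact hpT' (adj_truelit hDcl hnf' hxD hpT hxo)
      have hUnion : ∀ p ∈ S, p ∈ S1 ∨ p ∈ S2 := by
        intro p hp
        by_cases h : litT F p x₀ = true
        · exact Or.inl (Finset.mem_filter.2 ⟨hp, h⟩)
        · exact Or.inr (Finset.mem_filter.2 ⟨hp, h⟩)
      have hb := Ipairs_bound_split S S1 S2 hUnion hnocross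
      rw [← hIP] at hb
      have hc12 : S1.card + S2.card = S.card := by
        rw [hS1d, hS2d]
        exact Finset.card_filter_add_card_filter_not _
      have h1pos : 1 ≤ S1.card := Finset.card_pos.2 ⟨p₀, Finset.mem_filter.2 ⟨hp₀S, hx₀T⟩⟩
      have h2pos : 1 ≤ S2.card := Finset.card_pos.2 ⟨q₀, Finset.mem_filter.2 ⟨hq₀S, hq₀⟩⟩
      have harith : ∀ a ≤ 10, ∀ b ≤ 10, a + b = 10 → 1 ≤ a → 1 ≤ b →
          psi a + psi b ≤ 26 := by decide
      have hS10 : S.card = 10 := by rw [hcardS, hseq]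
      have := harith S1.card (by omega) S2.card (by omega) (by omega) h1pos h2pos
      omega
    -- construct the uncovered point w
    set Kp : VV F → Prop := fun v => ∀ p ∈ S, ∀ q ∈ S, p v = q v with hKp
    set U := Finset.univ.filter (fun v => ¬ Kp v) with hUd
    have hUmem : ∀ v, v ∈ U ↔ ¬ Kp v := by
      intro v
      rw [hUd, Finset.mem_filter]
      simp
    set rho : (VV F → Bool) → ({v // v ∈ U} → Bool) := fun p u => p u.1 with hrho
    have hρinj : Set.InjOn rho S := by
      intro p hp q hq h
      funext v
      by_cases hK : Kp v
      · exact hK p hp q hq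
      · have hvU : v ∈ U := Finset.mem_filter.2 ⟨Finset.mem_univ v, hK⟩
        exact congrFun h ⟨v, hvU⟩
    have hcardR : (S.image rho).card = 10 := by
      rw [Finset.card_image_of_injOn hρinj, hcardS, hseq]
    have h2U : 10 ≤ 2 ^ U.card := by
      have h1 : (S.image rho).card ≤ Fintype.card ({v // v ∈ U} → Bool) :=
        Finset.card_le_univ _
      rw [hcardR, Fintype.card_fun, Fintype.card_bool, Fintype.card_coe] at h1
      exact h1
    have hU4 : 4 ≤ U.card := by
      by_contra hlt
      push_neg at hlt
      have : (2:ℕ) ^ U.card ≤ 2 ^ 3 := Nat.pow_le_pow_right (by norm_num) (by omega)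
      omega
    obtain ⟨β, hβ⟩ : ∃ β : {v // v ∈ U} → Bool, β ∉ S.image rho := by
      by_contra hall
      push_neg at hall
      have hsub : (Finset.univ : Finset ({v // v ∈ U} → Bool)) ⊆ S.image rho :=
        fun β _ => hall β
      have h1 := Finset.card_le_card hsub
      rw [Finset.card_univ, Fintype.card_fun, Fintype.card_bool, Fintype.card_coe, hcardR] at h1
      have : (2:ℕ) ^ 4 ≤ 2 ^ U.card := Nat.pow_le_pow_right (by norm_num) hU4
      omega
    set w : VV F → Bool := fun v => if h : v ∈ U then β ⟨v, h⟩ else p₀ v with hw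
    have hwK : ∀ v, Kp v → w v = p₀ v := by
      intro v hK
      rw [hw]
      exact dif_neg (fun hvU => ((hUmem v).1 hvU) hK)
    have hwS : w ∉ S := by
      intro hwmem
      apply hβ
      refine Finset.mem_image.2 ⟨w, hwmem, ?_⟩
      funext u
      show w u.1 = β u
      rw [hw]
      show (if h : u.1 ∈ U then β ⟨u.1, h⟩ else p₀ u.1) = β u
      rw [dif_pos u.2]
    obtain ⟨D, hDF, hDfals⟩ := allFals hCS hU w
    by_cases hDfull : clauseVar D = var F
    · have : w = pt F D := eq_pt_of_fals (hCS D hDF) hDfull hDfals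
      exact hwS (this ▸ Finset.mem_image.2 ⟨D, Finset.mem_filter.2 ⟨hDF, hDfull⟩, rfl⟩)
    · have hDnon : D ∈ Fnon := Finset.mem_filter.2 ⟨hDF, hDfull⟩
      obtain ⟨x, hxD, hxall⟩ := hcommon D hDnon
      have hvar : x.natAbs ∈ var F := mem_var_of_mem hDF hxD
      have hKv : Kp ⟨x.natAbs, hvar⟩ := by
        intro p hp q hq
        have h1 := hxall p hp
        have h2 := hxall q hq
        unfold litT at h1 h2
        rw [dif_pos hvar] at h1 h2
        have e1 : p ⟨x.natAbs, hvar⟩ = decide (0 < x) := eq_of_beq h1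
        have e2 : q ⟨x.natAbs, hvar⟩ = decide (0 < x) := eq_of_beq h2
        rw [e1, e2]
      have hwvx : w ⟨x.natAbs, hvar⟩ = p₀ ⟨x.natAbs, hvar⟩ := hwK _ hKv
      have h0 := hxall p₀ hp₀S
      have hTw : litT F w x = true := by
        unfold litT at h0 ⊢
        rw [dif_pos hvar] at h0 ⊢
        rw [hwvx]
        exact h0
      rw [hDfals x hxD] at hTw
      exact Bool.false_ne_true hTw


/-! ### parity for hitting clause-sets -/

theorem hit_nfc_even (F : Finset (Finset ℤ)) (hCS : IsClauseSet F) (hU : ¬ Satisfiable F)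
    (hH : Hitting F) (hvar : (var F).Nonempty) : Even (nfc F) := by
  classical
  set Fs : Finset ℤ → Finset (VV F → Bool) :=
    fun C => Finset.univ.filter (fun t => fals F t C) with hFs
  have hcover : (Finset.univ : Finset (VV F → Bool)) = F.biUnion Fs := by
    apply Finset.Subset.antisymm
    · intro t _
      obtain ⟨D, hD, hfD⟩ := allFals hCS hU t
      exact Finset.mem_biUnion.2 ⟨D, hD, Finset.mem_filter.2 ⟨Finset.mem_univ t, hfD⟩⟩
    · intro t _
      exact Finset.mem_univ t
  have hdisj : ∀ C ∈ F, ∀ D ∈ F, C ≠ D → Disjoint (Fs C) (Fs D) := by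
    intro C hC D hD hne
    rw [Finset.disjoint_left]
    intro t htC htD
    rw [hFs] at htC htD
    have hfC : fals F t C := (Finset.mem_filter.1 htC).2
    have hfD : fals F t D := (Finset.mem_filter.1 htD).2
    obtain ⟨x, hxC, hxD⟩ := hH C hC D hD hne
    have h1 : litT F t x = false := hfC x hxC
    have h2 : litT F t (-x) = false := hfD (-x) hxD
    rw [litT_neg (natAbs_ne_zero_of_clause (hCS C hC) hxC) (mem_var_of_mem hC hxC), h1] at h2
    simp at h2
  have hsum : ∑ C ∈ F, (Fs C).card = 2 ^ (var F).card := by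
    rw [← Finset.card_biUnion hdisj, ← hcover, Finset.card_univ, Fintype.card_fun,
      Fintype.card_bool, Fintype.card_coe]
  have hfullcard : ∀ C ∈ F, clauseVar C = var F → (Fs C).card = 1 := by
    intro C hC hfull
    show (Finset.univ.filter (fun t => fals F t C)).card = 1
    have : Finset.univ.filter (fun t => fals F t C) = {pt F C} := by
      ext t
      rw [Finset.mem_filter, Finset.mem_singleton]
      constructor
      · rintro ⟨-, hf⟩
        exact eq_pt_of_fals (hCS C hC) hfull hf
      · rintro rfl
        exact ⟨Finset.mem_univ _, fals_pt (hCS C hC) (clauseVar_subset hC)⟩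
    rw [this, Finset.card_singleton]
  have hnoneven : ∀ D ∈ F, ¬ clauseVar D = var F → (Fs D).card % 2 = 0 := by
    intro D hD hnf
    have hsub : clauseVar D ⊆ var F := clauseVar_subset hD
    have hss : clauseVar D ⊂ var F := lt_of_le_of_ne hsub hnf
    obtain ⟨v0n, hv0var, hv0n⟩ := Finset.exists_of_ssubset hss
    set v0 : VV F := ⟨v0n, hv0var⟩ with hv0
    have hpres : ∀ t : VV F → Bool, fals F t D → fals F (flpa v0 t) D := by
      intro t ht x hx
      have hne : x.natAbs ≠ v0.1 := by
        intro h
        apply hv0n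
        have : x.natAbs ∈ clauseVar D := Finset.mem_image.2 ⟨x, hx, rfl⟩
        rwa [h] at this
      rw [litT_flpa_ne' hne]
      exact ht x hx
    set X0 := (Fs D).filter (fun t => t v0 = false) with hX0
    set X1 := (Fs D).filter (fun t => t v0 = true) with hX1
    have hX1' : X1 = (Fs D).filter (fun t => ¬ t v0 = false) := by
      rw [hX1]
      apply Finset.filter_congr
      intro t _
      simp
    have hcards : X0.card + X1.card = (Fs D).card := by
      rw [hX0, hX1']
      exact Finset.card_filter_add_card_filter_not _
    have hbij : X0.card = X1.card := by
      apply Finset.card_bij (fun t _ => flpa v0 t)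
      · intro t ht
        rw [hX0, Finset.mem_filter, hFs, Finset.mem_filter] at ht
        rw [hX1, Finset.mem_filter, hFs, Finset.mem_filter]
        refine ⟨⟨Finset.mem_univ _, hpres t ht.1.2⟩, ?_⟩
        rw [flpa_apply_eq, ht.2]
        rfl
      · intro t ht t' ht' h
        have := congrArg (flpa v0) h
        rwa [flpa_flpa, flpa_flpa] at this
      · intro u hu
        rw [hX1, Finset.mem_filter, hFs, Finset.mem_filter] at hu
        refine ⟨flpa v0 u, ?_, flpa_flpa v0 u⟩
        rw [hX0, Finset.mem_filter, hFs, Finset.mem_filter]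
        refine ⟨⟨Finset.mem_univ _, hpres u hu.1.2⟩, ?_⟩
        rw [flpa_apply_eq, hu.2]
        rfl
    omega
  -- now the parity count
  have hsplit : ∑ C ∈ F, (Fs C).card =
      ∑ C ∈ F.filter (fun C => clauseVar C = var F), (Fs C).card +
      ∑ C ∈ F.filter (fun C => ¬ clauseVar C = var F), (Fs C).card :=
    (Finset.sum_filter_add_sum_filter_not F _ _).symm
  have hfullsum : ∑ C ∈ F.filter (fun C => clauseVar C = var F), (Fs C).card = nfc F := by
    rw [Finset.sum_congr rfl (fun C hC =>
      hfullcard C (Finset.mem_filter.1 hC).1 (Finset.mem_filter.1 hC).2)]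
    rw [Finset.sum_const, smul_eq_mul, mul_one]
    rfl
  have hnonsum : (∑ C ∈ F.filter (fun C => ¬ clauseVar C = var F), (Fs C).card) % 2 = 0 := by
    rw [Finset.sum_nat_mod]
    have : ∑ C ∈ F.filter (fun C => ¬ clauseVar C = var F), (Fs C).card % 2 = 0 := by
      apply Finset.sum_eq_zero
      intro C hC
      exact hnoneven C (Finset.mem_filter.1 hC).1 (Finset.mem_filter.1 hC).2
    rw [this]
  have hpow : (2:ℕ) ^ (var F).card % 2 = 0 := by
    have h1 : 1 ≤ (var F).card := Finset.card_pos.2 hvar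
    obtain ⟨k, hk⟩ : ∃ k, (var F).card = k + 1 := ⟨(var F).card - 1, by omega⟩
    rw [hk, pow_succ]
    omega
  rw [Nat.even_iff]
  omega


/-! ### gluing lemmas -/

lemma var_nonempty {F : Finset (Finset ℤ)} (hdef : deficiency F = 7) : (var F).Nonempty := by
  by_contra h
  rw [Finset.not_nonempty_iff_eq_empty] at h
  have hall : ∀ C ∈ F, C = ∅ := by
    intro C hC
    have h1 : clauseVar C ⊆ var F := clauseVar_subset hC
    rw [h, Finset.subset_empty] at h1
    exact Finset.image_eq_empty.1 h1
  have hsub : F ⊆ {∅} := fun C hC => Finset.mem_singleton.2 (hall C hC)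
  have hcard : F.card ≤ 1 := le_trans (Finset.card_le_card hsub) (by simp)
  unfold deficiency numVar at hdef
  rw [h] at hdef
  simp at hdef
  omega

lemma unsat_of_allfals (F : Finset (Finset ℤ)) (hCS : IsClauseSet F)
    (h : ∀ t : VV F → Bool, ∃ D ∈ F, fals F t D) : ¬ Satisfiable F := by
  rintro ⟨A, hA, hint⟩
  obtain ⟨D, hD, hf⟩ := h (fun v => decide ((v.1 : ℤ) ∈ A))
  obtain ⟨x, hx⟩ := hint D hD
  have hxA : x ∈ A := (Finset.mem_inter.1 hx).1
  have hxD : x ∈ D := (Finset.mem_inter.1 hx).2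
  have hT := litT_asg hA hxA (mem_var_of_mem hD hxD)
  rw [hf x hxD] at hT
  exact Bool.false_ne_true hT

/-- MU upper bound -/
theorem mu_upper (F : Finset (Finset ℤ)) (hCS : IsClauseSet F) (hMU : MinUnsat F)
    (hdef : deficiency F = 7) : nfc F ≤ 9 :=
  master F hCS hMU.1 (priv_MU hCS hMU) hdef

/-- hitting upper bound -/
theorem hit_upper (F : Finset (Finset ℤ)) (hCS : IsClauseSet F) (hU : ¬ Satisfiable F)
    (hH : Hitting F) (hdef : deficiency F = 7) : nfc F ≤ 8 := by
  have h9 : nfc F ≤ 9 := master F hCS hU (priv_hit hCS hH) hdef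
  have heven : Even (nfc F) := hit_nfc_even F hCS hU hH (var_nonempty hdef)
  rw [Nat.even_iff] at heven
  omega

/-! ### the examples -/

def Fmu : Finset (Finset ℤ) :=
  { {1,2,3,4}, {1,2,3,-4}, {1,2,-3,4}, {1,-2,3,4}, {1,-2,3,-4}, {1,-2,-3,4},
    {-1,2,3,4}, {-1,2,3,-4}, {-1,2,-3,4}, {-1,-2}, {-3,-4} }

def Fhit : Finset (Finset ℤ) :=
  { {-1,-2}, {-1,2,-3}, {-1,2,3},
    {1,2,3,4}, {1,2,3,-4}, {1,2,-3,4}, {1,2,-3,-4},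
    {1,-2,3,4}, {1,-2,3,-4}, {1,-2,-3,4}, {1,-2,-3,-4} }

def WitMu : Finset ℤ → Finset ℤ := fun C =>
  if C = {-1,-2} then {1,2,-3,-4}
  else if C = {-3,-4} then {-1,-2,3,4}
  else C.image (fun x => -x)

lemma Fmu_CS : IsClauseSet Fmu := by
  unfold IsClauseSet IsClause Fmu
  decide

lemma Fmu_unsat : ¬ Satisfiable Fmu :=
  unsat_of_allfals Fmu Fmu_CS (by decide)

lemma Fmu_subsets : ∀ G ⊂ Fmu, Satisfiable G := by
  intro G hG
  obtain ⟨C', hC'F, hC'G⟩ := Finset.exists_of_ssubset hG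
  refine ⟨WitMu C', ?_, ?_⟩
  · exact (show ∀ C ∈ Fmu, IsClause (WitMu C) by
      unfold IsClause WitMu Fmu
      decide) C' hC'F
  · intro D hD
    exact (show ∀ C ∈ Fmu, ∀ D ∈ Fmu, D ≠ C → ((WitMu C) ∩ D).Nonempty by
      unfold WitMu Fmu
      decide) C' hC'F D (hG.subset hD) (fun h => hC'G (h ▸ hD))

lemma Fmu_all : IsClauseSet Fmu ∧ MinUnsat Fmu ∧ deficiency Fmu = 7 ∧ nfc Fmu = 9 := by
  refine ⟨Fmu_CS, ⟨Fmu_unsat, Fmu_subsets⟩, ?_, by decide⟩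
  have h1 : Fmu.card = 11 := by decide
  have h2 : numVar Fmu = 4 := by decide
  unfold deficiency
  rw [h1, h2]
  norm_num

def WitHit : Finset ℤ → Finset ℤ := fun C =>
  if C = {-1,-2} then {1,2,-3,-4}
  else if C = {-1,2,-3} then {1,-2,3,-4}
  else if C = {-1,2,3} then {1,-2,-3,-4}
  else C.image (fun x => -x)

lemma Fhit_CS : IsClauseSet Fhit := by
  unfold IsClauseSet IsClause Fhit
  decide

lemma Fhit_unsat : ¬ Satisfiable Fhit :=
  unsat_of_allfals Fhit Fhit_CS (by decide)

lemma Fhit_all : IsClauseSet Fhit ∧ ¬ Satisfiable Fhit ∧ Hitting Fhit ∧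
    deficiency Fhit = 7 ∧ nfc Fhit = 8 := by
  refine ⟨Fhit_CS, Fhit_unsat, by unfold Hitting Fhit; decide, ?_, by decide⟩
  have h1 : Fhit.card = 11 := by decide
  have h2 : numVar Fhit = 4 := by decide
  unfold deficiency
  rw [h1, h2]
  norm_num

end KZ

theorem stmt_18 :
    ((∀ F : Finset (Finset ℤ), IsClauseSet F → MinUnsat F → deficiency F = 7 → nfc F ≤ 9) ∧
     (∃ F : Finset (Finset ℤ), IsClauseSet F ∧ MinUnsat F ∧ deficiency F = 7 ∧ nfc F = 9)) ∧
    ((∀ F : Finset (Finset ℤ), IsClauseSet F → ¬ Satisfiable F → Hitting F →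
        deficiency F = 7 → nfc F ≤ 8) ∧
     (∃ F : Finset (Finset ℤ), IsClauseSet F ∧ ¬ Satisfiable F ∧ Hitting F ∧
        deficiency F = 7 ∧ nfc F = 8)) :=
  ⟨⟨fun F hCS hMU hdef => KZ.mu_upper F hCS hMU hdef, ⟨KZ.Fmu, KZ.Fmu_all⟩⟩,
   ⟨fun F hCS hU hH hdef => KZ.hit_upper F hCS hU hH hdef, ⟨KZ.Fhit, KZ.Fhit_all⟩⟩⟩
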